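/- arXiv:1904.07322 — 5 statements merged into one kernel-verified Lean document; each statement's English description precedes it below -/
import Mathlib

section
/- Let (C, D) be a complete cotorsion pair in an abelian category A. The assignments A ↦ cA and A ↦ dA (from the approximation sequence 0 → dA → cA → A → 0) define functors from A to the additive quotient categories C/(C ∩ D) and D/(C ∩ D), respectively. -/
open CategoryTheory Category Limits

attribute [local instance] CategoryTheory.Abelian.hasFiniteBiproducts
attribute [local instance] CategoryTheory.Limits.HasFiniteBiproducts.of_hasFiniteProducts

universe w v u

namespace Paper

variable {A : Type u} [Category.{v} A] [Abelian A]

/-- `IsSes i p` expresses that `0 ⟶ X ⟶ Y ⟶ Z ⟶ 0` is a short exact sequence. -/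
def IsSes {X Y Z : A} (i : X ⟶ Y) (p : Y ⟶ Z) : Prop :=
  ∃ w : i ≫ p = 0, (ShortComplex.mk i p w).ShortExact

/-- `Ext¹(X, Y) = 0`, phrased as: every extension of `X` by `Y` splits. -/
def Ext1Zero (X Y : A) : Prop :=
  ∀ ⦃E : A⦄ (i : Y ⟶ E) (p : E ⟶ X), IsSes i p → ∃ s : X ⟶ E, s ≫ p = 𝟙 X

/-- A torsion pair `(T, F)` of (strictly full) subcategories of an abelian category. -/
structure IsTorsionPair (T F : Set A) : Prop where
  isoClosed_torsion : ∀ {X Y : A}, (X ≅ Y) → X ∈ T → Y ∈ T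
  isoClosed_torsionFree : ∀ {X Y : A}, (X ≅ Y) → X ∈ F → Y ∈ F
  hom_zero : ∀ {X Y : A}, X ∈ T → Y ∈ F → ∀ f : X ⟶ Y, f = 0
  seq : ∀ X : A, ∃ (tX fX : A) (i : tX ⟶ X) (p : X ⟶ fX), tX ∈ T ∧ fX ∈ F ∧ IsSes i p

/-- A (complete) cotorsion pair `(C, D)` in an abelian category. -/
structure IsCotorsionPair (C D : Set A) : Prop where
  left_eq : C = {X : A | ∀ Y ∈ D, Ext1Zero X Y}
  right_eq : D = {Y : A | ∀ X ∈ C, Ext1Zero X Y}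
  seq₁ : ∀ X : A, ∃ (dX cX : A) (i : dX ⟶ cX) (p : cX ⟶ X), dX ∈ D ∧ cX ∈ C ∧ IsSes i p
  seq₂ : ∀ X : A, ∃ (dX cX : A) (i : X ⟶ dX) (p : dX ⟶ cX), dX ∈ D ∧ cX ∈ C ∧ IsSes i p

/-- `f` factors through some object belonging to the class `P`. -/
def FactorsThroughClass (P : Set A) {X Y : A} (f : X ⟶ Y) : Prop :=
  ∃ (Z : A) (_ : Z ∈ P) (a : X ⟶ Z) (b : Z ⟶ Y), a ≫ b = f

/-- The hom-relation on the full subcategory on `S` identifying two morphisms whose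
difference factors through an object of `P`. -/
def quotRel (S P : Set A) : HomRel (ObjectProperty.FullSubcategory (· ∈ S)) :=
  fun {X Y} f g =>
    FactorsThroughClass P ((show X.obj ⟶ Y.obj from f.hom) - (show X.obj ⟶ Y.obj from g.hom))

/-- The additive quotient of the full subcategory on `S` by the morphisms factoring
through objects of `P`. -/
abbrev AddQuot (S P : Set A) := CategoryTheory.Quotient (quotRel S P)

/-- The subcategory of quotients of (finite direct sums of) objects of `T`. -/
def Fac (T : Set A) : Set A := {X : A | ∃ Y ∈ T, ∃ p : Y ⟶ X, Epi p}

/-- The right `Hom`-orthogonal `T^⊥`. -/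
def rightHomPerp (T : Set A) : Set A := {X : A | ∀ Y ∈ T, ∀ f : Y ⟶ X, f = 0}

/-- The left `Hom`-orthogonal `^⊥F`. -/
def leftHomPerp (F : Set A) : Set A := {X : A | ∀ Y ∈ F, ∀ f : X ⟶ Y, f = 0}

/-- The right `Ext¹`-orthogonal `T^{⊥₁}`. -/
def rightExt1Perp (T : Set A) : Set A := {X : A | ∀ Y ∈ T, Ext1Zero Y X}

/-- The left `Ext¹`-orthogonal `^{⊥₁}D`. -/
def leftExt1Perp (D : Set A) : Set A := {X : A | ∀ Y ∈ D, Ext1Zero X Y}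

/-- `X` has projective dimension at most one: it has a length-one projective resolution. -/
def PdLeOne (X : A) : Prop :=
  ∃ (P₁ P₀ : A) (i : P₁ ⟶ P₀) (p : P₀ ⟶ X), Projective P₁ ∧ Projective P₀ ∧ IsSes i p

/-- A weak tilting subcategory of an abelian category with enough projectives. -/
structure IsWeakTilting (T : Set A) : Prop where
  sum_mem : ∀ {X Y : A}, X ∈ T → Y ∈ T → (X ⊞ Y) ∈ T
  summand_mem : ∀ {X Y : A}, X ∈ T → (∃ (s : Y ⟶ X) (r : X ⟶ Y), s ≫ r = 𝟙 Y) → Y ∈ T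
  ext1_zero : ∀ {X Y : A}, X ∈ T → Y ∈ T → Ext1Zero X Y
  pd_le_one : ∀ X ∈ T, PdLeOne X
  coresolution : ∀ P : A, Projective P → ∃ (T₀ T₁ : A) (i : P ⟶ T₀) (p : T₀ ⟶ T₁),
    T₀ ∈ T ∧ T₁ ∈ T ∧ IsSes i p

/-- `φ : X ⟶ E` is a right `T`-approximation of `E`. -/
def IsRightApprox (T : Set A) {X E : A} (φ : X ⟶ E) : Prop :=
  X ∈ T ∧ ∀ X' ∈ T, ∀ f : X' ⟶ E, ∃ g : X' ⟶ X, g ≫ φ = f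

/-- A tilting subcategory: a weak tilting subcategory that is contravariantly finite. -/
structure IsTilting (T : Set A) extends IsWeakTilting T : Prop where
  contravariantly_finite : ∀ E : A, ∃ (X : A) (φ : X ⟶ E), IsRightApprox T φ


section Statement4Aux

/-- Build a short exact sequence from a mono, an epi and the kernel property. -/
lemma shortExact_of_kernel {K E M : A} {j : K ⟶ E} {p : E ⟶ M} (w : j ≫ p = 0)
    [Mono j] [Epi p]
    (hker : ∀ {T : A} (t : T ⟶ E), t ≫ p = 0 → ∃ t' : T ⟶ K, t' ≫ j = t) :
    (ShortComplex.mk j p w).ShortExact := by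
  refine ⟨(ShortComplex.mk j p w).exact_of_f_is_kernel ?_⟩
  exact KernelFork.IsLimit.ofι' j w
    (fun {T} t ht => ⟨(hker t ht).choose, (hker t ht).choose_spec⟩)

/-- The pullback of a short exact sequence along a morphism is short exact. -/
lemma ses_pullback {K E M W : A} {j : K ⟶ E} {p : E ⟶ M} (w : j ≫ p = 0)
    (hS : (ShortComplex.mk j p w).ShortExact) (u : W ⟶ M) :
    ∃ l : K ⟶ pullback p u, l ≫ pullback.fst p u = j ∧ IsSes l (pullback.snd p u) := by
  haveI : Mono j := hS.mono_f
  haveI : Epi p := hS.epi_g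
  have hw0 : j ≫ p = (0 : K ⟶ W) ≫ u := by rw [w, zero_comp]
  have hlf : pullback.lift j 0 hw0 ≫ pullback.fst p u = j := pullback.lift_fst _ _ _
  have hls : pullback.lift j 0 hw0 ≫ pullback.snd p u = 0 := pullback.lift_snd _ _ _
  haveI : Mono (pullback.lift j 0 hw0) := mono_of_mono_fac hlf
  refine ⟨pullback.lift j 0 hw0, hlf, hls, shortExact_of_kernel hls ?_⟩
  intro T t ht
  have h1 : (t ≫ pullback.fst p u) ≫ p = 0 := by
    rw [assoc, pullback.condition, ← assoc, ht, zero_comp]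
  refine ⟨hS.exact.lift (t ≫ pullback.fst p u) h1, ?_⟩
  apply pullback.hom_ext
  · rw [assoc, hlf]
    exact hS.exact.lift_f _ h1
  · rw [assoc, hls, comp_zero, ht]

/-- The pushout of a short exact sequence along a morphism is short exact. -/
lemma ses_pushout {K E M W : A} {j : K ⟶ E} {p : E ⟶ M} (w : j ≫ p = 0)
    (hS : (ShortComplex.mk j p w).ShortExact) (u : K ⟶ W) :
    ∃ q : pushout j u ⟶ M, pushout.inl j u ≫ q = p ∧ IsSes (pushout.inr j u) q := by
  haveI : Mono j := hS.mono_f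
  haveI : Epi p := hS.epi_g
  have hw0 : j ≫ p = u ≫ (0 : W ⟶ M) := by rw [w, comp_zero]
  have hld : pushout.inl j u ≫ pushout.desc p 0 hw0 = p := pushout.inl_desc _ _ _
  have hi0 : pushout.inr j u ≫ pushout.desc p 0 hw0 = 0 := pushout.inr_desc _ _ _
  haveI : Epi (pushout.desc p 0 hw0) := epi_of_epi_fac hld
  refine ⟨pushout.desc p 0 hw0, hld, hi0, ?_⟩
  refine ⟨(ShortComplex.mk _ _ hi0).exact_of_g_is_cokernel ?_⟩
  refine CokernelCofork.IsColimit.ofπ' _ hi0 (fun {T} t ht => ?_)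
  have h1 : j ≫ pushout.inl j u ≫ t = 0 := by
    rw [← assoc, pushout.condition, assoc, ht, comp_zero]
  refine ⟨hS.exact.desc (pushout.inl j u ≫ t) h1, ?_⟩
  apply pushout.hom_ext
  · rw [← assoc, hld]
    exact hS.exact.g_desc _ h1
  · rw [← assoc, hi0, zero_comp, ht]

/-- Lifting along an epimorphism whose kernel `K` satisfies `Ext¹(W, K) = 0`. -/
lemma lift_of_ext1Zero {K E M W : A} {j : K ⟶ E} {p : E ⟶ M}
    (hse : IsSes j p) (hext : Ext1Zero W K) (u : W ⟶ M) :
    ∃ v : W ⟶ E, v ≫ p = u := by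
  obtain ⟨w, hS⟩ := hse
  obtain ⟨l, hlf, hses'⟩ := ses_pullback w hS u
  obtain ⟨s, hs⟩ := hext l (pullback.snd p u) hses'
  exact ⟨s ≫ pullback.fst p u,
    by rw [assoc, pullback.condition, ← assoc, hs, id_comp]⟩

/-- Extending along a monomorphism whose cokernel `M` satisfies `Ext¹(M, W) = 0`. -/
lemma extend_of_ext1Zero {K E M W : A} {j : K ⟶ E} {p : E ⟶ M}
    (hse : IsSes j p) (hext : Ext1Zero M W) (u : K ⟶ W) :
    ∃ v : E ⟶ W, j ≫ v = u := by
  obtain ⟨w, hS⟩ := hse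
  obtain ⟨q, hq, hses'⟩ := ses_pushout w hS u
  obtain ⟨s, hs⟩ := hext (pushout.inr j u) q hses'
  obtain ⟨wq, hSq⟩ := hses'
  haveI : Mono (pushout.inr j u) := hSq.mono_f
  have h0 : (𝟙 (pushout j u) - q ≫ s) ≫ q = 0 := by
    rw [Preadditive.sub_comp, id_comp, assoc, hs, comp_id, sub_self]
  have hρ : hSq.exact.lift _ h0 ≫ pushout.inr j u = 𝟙 (pushout j u) - q ≫ s :=
    hSq.exact.lift_f _ h0
  have hinrρ : pushout.inr j u ≫ hSq.exact.lift _ h0 = 𝟙 W := by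
    rw [← cancel_mono (pushout.inr j u), assoc, hρ, Preadditive.comp_sub, comp_id,
      ← assoc, wq, zero_comp, sub_zero, id_comp]
  refine ⟨pushout.inl j u ≫ hSq.exact.lift _ h0, ?_⟩
  rw [← assoc, pushout.condition, assoc, hinrρ, comp_id]

/-- The class of objects `X` with `Ext¹(X, Y) = 0` is closed under extensions. -/
lemma ext1Zero_of_extension {V M B Y : A} {a : V ⟶ M} {π : M ⟶ B}
    (hAMB : IsSes a π) (hA : Ext1Zero V Y) (hB : Ext1Zero B Y) : Ext1Zero M Y := by
  intro E j p hse
  obtain ⟨w, hS⟩ := hse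
  obtain ⟨w0, hS0⟩ := hAMB
  haveI : Mono j := hS.mono_f
  haveI : Epi p := hS.epi_g
  haveI : Mono a := hS0.mono_f
  haveI : Epi π := hS0.epi_g
  -- Step 1: lift `a : V ⟶ M` to `t : V ⟶ E` along the epi `p`.
  obtain ⟨t, ht⟩ := lift_of_ext1Zero ⟨w, hS⟩ hA a
  haveI : Mono t := mono_of_mono_fac ht
  -- Step 2: the cokernel of `t` together with the induced map to `B`.
  have hTQw : t ≫ cokernel.π t = 0 := cokernel.condition t
  have hTQ : (ShortComplex.mk t (cokernel.π t) hTQw).Exact :=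
    (ShortComplex.mk t (cokernel.π t) hTQw).exact_of_g_is_cokernel (cokernelIsCokernel t)
  have htπ : t ≫ p ≫ π = 0 := by rw [← assoc, ht, w0]
  have hqρ : cokernel.π t ≫ cokernel.desc t (p ≫ π) htπ = p ≫ π := cokernel.π_desc _ _ _
  set q : E ⟶ cokernel t := cokernel.π t with hqdef
  set ρ : cokernel t ⟶ B := cokernel.desc t (p ≫ π) htπ with hρdef
  set y : Y ⟶ cokernel t := j ≫ q with hydef
  have hyρ : y ≫ ρ = 0 := by rw [hydef, assoc, hqρ, ← assoc, w, zero_comp]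
  -- `y` is a mono.
  haveI hmy : Mono y := by
    rw [Preadditive.mono_iff_cancel_zero]
    intro T g hg
    have h1 : (g ≫ j) ≫ q = 0 := by rw [assoc, ← hydef, hg]
    obtain ⟨v, hv⟩ := hTQ.lift' (g ≫ j) h1
    have hv0 : v ≫ a = 0 := by
      have h2 : v ≫ t ≫ p = g ≫ j ≫ p := by rw [← assoc, hv, assoc]
      rw [← ht, h2, w, comp_zero]
    have hvz : v = 0 := by rw [← cancel_mono a, hv0, zero_comp]
    rw [← cancel_mono j, ← hv, hvz, zero_comp, zero_comp]
  haveI : Epi (p ≫ π) := epi_comp p π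
  haveI hρe : Epi ρ := epi_of_epi_fac hqρ
  -- `(y, ρ)` is a short exact sequence.
  have hsesYρ : IsSes y ρ := by
    refine ⟨hyρ, shortExact_of_kernel hyρ ?_⟩
    intro T k hk
    haveI : Epi (pullback.snd q k) := inferInstance
    have hc : pullback.fst q k ≫ q = pullback.snd q k ≫ k := pullback.condition
    have h2 : (pullback.fst q k ≫ p) ≫ π = 0 := by
      rw [assoc, ← hqρ, ← assoc, hc, assoc, hk, comp_zero]
    obtain ⟨g, hg⟩ := hS0.exact.lift' (pullback.fst q k ≫ p) h2
    have h3 : (pullback.fst q k - g ≫ t) ≫ p = 0 := by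
      rw [Preadditive.sub_comp, assoc, ht, hg, sub_self]
    obtain ⟨g₂, hg₂⟩ := hS.exact.lift' (pullback.fst q k - g ≫ t) h3
    have h4 : pullback.snd q k ≫ k = g₂ ≫ y := by
      rw [hydef, ← assoc, hg₂, Preadditive.sub_comp, assoc, hTQw, comp_zero, sub_zero, hc]
    have h5 : kernel.ι (pullback.snd q k) ≫ g₂ = 0 := by
      rw [← cancel_mono y, assoc, ← h4, ← assoc, kernel.condition, zero_comp, zero_comp]
    refine ⟨Abelian.epiDesc (pullback.snd q k) g₂ h5, ?_⟩
    rw [← cancel_epi (pullback.snd q k), ← assoc, Abelian.comp_epiDesc, h4]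
  obtain ⟨σ, hσ⟩ := hB y ρ hsesYρ
  -- The correction morphism `χ`.
  have hχρ : (p ≫ π ≫ σ - q) ≫ ρ = 0 := by
    rw [Preadditive.sub_comp, assoc, assoc, hσ, comp_id, hqρ, sub_self]
  obtain ⟨wy, hSy⟩ := hsesYρ
  obtain ⟨χ', hχ'⟩ := hSy.exact.lift' (p ≫ π ≫ σ - q) hχρ
  have hjχ : j ≫ χ' = -𝟙 Y := by
    rw [← cancel_mono y, assoc, hχ', Preadditive.comp_sub, ← assoc, w, zero_comp, zero_sub,
      ← hydef, Preadditive.neg_comp, id_comp]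
  have hju : kernel.ι p ≫ (𝟙 E + χ' ≫ j) = 0 := by
    obtain ⟨κ', hκ'⟩ := hS.exact.lift' (kernel.ι p) (kernel.condition p)
    rw [← hκ', Preadditive.comp_add, comp_id, assoc, ← assoc j χ' j, hjχ, Preadditive.neg_comp, id_comp,
      Preadditive.comp_neg, add_neg_cancel]
  have hps : p ≫ Abelian.epiDesc p (𝟙 E + χ' ≫ j) hju = 𝟙 E + χ' ≫ j :=
    Abelian.comp_epiDesc _ _ _
  refine ⟨Abelian.epiDesc p (𝟙 E + χ' ≫ j) hju, ?_⟩
  rw [← cancel_epi p, ← assoc, hps, Preadditive.add_comp, id_comp, assoc, w, comp_zero,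
    add_zero, comp_id]

/-- Any morphism from an object of `C` to an object of `D` factors through `C ∩ D`. -/
lemma factors_of_mem {C D : Set A} (h : IsCotorsionPair C D) {V W : A}
    (hV : V ∈ C) (hW : W ∈ D) (g : V ⟶ W) : FactorsThroughClass (C ∩ D) g := by
  obtain ⟨T, B, μ, ν, hT, hB, hses⟩ := h.seq₂ V
  rw [h.left_eq] at hV hB
  have hTC : T ∈ C := by
    rw [h.left_eq]
    intro Y hY
    exact ext1Zero_of_extension hses (hV Y hY) (hB Y hY)
  obtain ⟨v, hv⟩ := extend_of_ext1Zero hses (hB W hW) g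
  exact ⟨T, ⟨hTC, hT⟩, μ, v, hv⟩

end Statement4Aux


/-- For a complete cotorsion pair `(C, D)`, the assignments `A ↦ cA`
and `A ↦ dA` coming from the approximation sequences `0 → dA → cA → A → 0` define
functors to the additive quotients `C/(C ∩ D)` and `D/(C ∩ D)` respectively. -/
theorem statement4 {C D : Set A} (h : IsCotorsionPair C D) :
    ∃ (c : A ⥤ AddQuot C (C ∩ D)) (d : A ⥤ AddQuot D (C ∩ D)),
      ∀ X : A, ∃ (i : ((d.obj X).as).obj ⟶ ((c.obj X).as).obj)
        (p : ((c.obj X).as).obj ⟶ X), IsSes i p := by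
  classical
  choose dOb cOb iMap pMap hdMem hcMem hses using h.seq₁
  -- `Ext¹`-orthogonality.
  have hCD : ∀ {V W : A}, V ∈ C → W ∈ D → Ext1Zero V W := by
    intro V W hV hW
    rw [h.left_eq] at hV
    exact hV W hW
  -- choice of lifts of morphisms
  have hlift : ∀ (X Y : A) (f : X ⟶ Y),
      ∃ g : cOb X ⟶ cOb Y, g ≫ pMap Y = pMap X ≫ f := fun X Y f =>
    lift_of_ext1Zero (hses Y) (hCD (hcMem X) (hdMem Y)) (pMap X ≫ f)
  choose cmap hcmap using hlift
  -- well-definedness on the `c` side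
  have key : ∀ (X Y : A) (g : cOb X ⟶ cOb Y), g ≫ pMap Y = 0 →
      FactorsThroughClass (C ∩ D) g := by
    intro X Y g hg
    obtain ⟨w, hS⟩ := hses Y
    haveI : Mono (iMap Y) := hS.mono_f
    obtain ⟨g', hg'⟩ := hS.exact.lift' g hg
    obtain ⟨T, hT, aa, bb, hab⟩ := factors_of_mem h (hcMem X) (hdMem Y) g'
    exact ⟨T, hT, aa, bb ≫ iMap Y, by rw [← assoc, hab, hg']⟩
  -- identities satisfied by the difference morphisms on the `c` side
  have keyId : ∀ X : A, (cmap X X (𝟙 X) - 𝟙 (cOb X)) ≫ pMap X = 0 := by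
    intro X
    rw [Preadditive.sub_comp, hcmap, comp_id, id_comp, sub_self]
  have keyComp : ∀ (X Y Z : A) (f : X ⟶ Y) (g : Y ⟶ Z),
      (cmap X Z (f ≫ g) - cmap X Y f ≫ cmap Y Z g) ≫ pMap Z = 0 := by
    intro X Y Z f g
    rw [Preadditive.sub_comp, hcmap, assoc (cmap X Y f) (cmap Y Z g) (pMap Z), hcmap,
      ← assoc (cmap X Y f) (pMap Y) g, hcmap, assoc (pMap X) f g, sub_self]
  -- choice of the induced maps on the `d` side
  have hdlift : ∀ (X Y : A) (f : X ⟶ Y),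
      ∃ g : dOb X ⟶ dOb Y, g ≫ iMap Y = iMap X ≫ cmap X Y f := by
    intro X Y f
    obtain ⟨w, hS⟩ := hses Y
    obtain ⟨wX, hSX⟩ := hses X
    haveI : Mono (iMap Y) := hS.mono_f
    refine hS.exact.lift' _ ?_
    rw [assoc, hcmap, ← assoc, wX, zero_comp]
  choose dmap hdmap using hdlift
  -- well-definedness on the `d` side
  have keyD : ∀ (X Y : A) (δ : dOb X ⟶ dOb Y) (g : cOb X ⟶ cOb Y),
      δ ≫ iMap Y = iMap X ≫ g → g ≫ pMap Y = 0 → FactorsThroughClass (C ∩ D) δ := by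
    intro X Y δ g hδ hg
    obtain ⟨w, hS⟩ := hses Y
    haveI : Mono (iMap Y) := hS.mono_f
    obtain ⟨g', hg'⟩ := hS.exact.lift' g hg
    have hδ2 : δ = iMap X ≫ g' := by
      rw [← cancel_mono (iMap Y), hδ, assoc, hg']
    obtain ⟨T, hT, aa, bb, hab⟩ := factors_of_mem h (hcMem X) (hdMem Y) g'
    exact ⟨T, hT, iMap X ≫ aa, bb, by rw [assoc, hab, ← hδ2]⟩
  -- the two functors
  refine ⟨{
    obj := fun X => { as := ⟨cOb X, hcMem X⟩ }
    map := fun {X Y} f => (Quotient.functor (quotRel C (C ∩ D))).map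
      (show (⟨cOb X, hcMem X⟩ : ObjectProperty.FullSubcategory (· ∈ C)) ⟶ ⟨cOb Y, hcMem Y⟩ from ObjectProperty.homMk (cmap X Y f))
    map_id := fun X => by
      have hr : quotRel C (C ∩ D)
          (show (⟨cOb X, hcMem X⟩ : ObjectProperty.FullSubcategory (· ∈ C)) ⟶ ⟨cOb X, hcMem X⟩ from
            ObjectProperty.homMk (cmap X X (𝟙 X)))
          (𝟙 (⟨cOb X, hcMem X⟩ : ObjectProperty.FullSubcategory (· ∈ C))) := by
        show FactorsThroughClass (C ∩ D) (cmap X X (𝟙 X) - 𝟙 (cOb X))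
        exact key X X _ (keyId X)
      exact (CategoryTheory.Quotient.sound _ hr).trans
        ((Quotient.functor (quotRel C (C ∩ D))).map_id _)
    map_comp := fun {X Y Z} f g => by
      have hr : quotRel C (C ∩ D)
          (show (⟨cOb X, hcMem X⟩ : ObjectProperty.FullSubcategory (· ∈ C)) ⟶ ⟨cOb Z, hcMem Z⟩ from
            ObjectProperty.homMk (cmap X Z (f ≫ g)))
          ((show (⟨cOb X, hcMem X⟩ : ObjectProperty.FullSubcategory (· ∈ C)) ⟶ ⟨cOb Y, hcMem Y⟩ from
            ObjectProperty.homMk (cmap X Y f)) ≫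
           (show (⟨cOb Y, hcMem Y⟩ : ObjectProperty.FullSubcategory (· ∈ C)) ⟶ ⟨cOb Z, hcMem Z⟩ from
            ObjectProperty.homMk (cmap Y Z g))) := by
        show FactorsThroughClass (C ∩ D) (cmap X Z (f ≫ g) - cmap X Y f ≫ cmap Y Z g)
        exact key X Z _ (keyComp X Y Z f g)
      show (Quotient.functor (quotRel C (C ∩ D))).map _ =
        (Quotient.functor (quotRel C (C ∩ D))).map
          (show (⟨cOb X, hcMem X⟩ : ObjectProperty.FullSubcategory (· ∈ C)) ⟶ ⟨cOb Y, hcMem Y⟩ from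
            ObjectProperty.homMk (cmap X Y f)) ≫
        (Quotient.functor (quotRel C (C ∩ D))).map
          (show (⟨cOb Y, hcMem Y⟩ : ObjectProperty.FullSubcategory (· ∈ C)) ⟶ ⟨cOb Z, hcMem Z⟩ from
            ObjectProperty.homMk (cmap Y Z g))
      rw [← Functor.map_comp]
      exact CategoryTheory.Quotient.sound _ hr
  }, {
    obj := fun X => { as := ⟨dOb X, hdMem X⟩ }
    map := fun {X Y} f => (Quotient.functor (quotRel D (C ∩ D))).map
      (show (⟨dOb X, hdMem X⟩ : ObjectProperty.FullSubcategory (· ∈ D)) ⟶ ⟨dOb Y, hdMem Y⟩ from ObjectProperty.homMk (dmap X Y f))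
    map_id := fun X => by
      have hr : quotRel D (C ∩ D)
          (show (⟨dOb X, hdMem X⟩ : ObjectProperty.FullSubcategory (· ∈ D)) ⟶ ⟨dOb X, hdMem X⟩ from
            ObjectProperty.homMk (dmap X X (𝟙 X)))
          (𝟙 (⟨dOb X, hdMem X⟩ : ObjectProperty.FullSubcategory (· ∈ D))) := by
        show FactorsThroughClass (C ∩ D) (dmap X X (𝟙 X) - 𝟙 (dOb X))
        refine keyD X X _ (cmap X X (𝟙 X) - 𝟙 (cOb X)) ?_ (keyId X)
        rw [Preadditive.sub_comp, Preadditive.comp_sub, hdmap, comp_id, id_comp]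
      exact (CategoryTheory.Quotient.sound _ hr).trans
        ((Quotient.functor (quotRel D (C ∩ D))).map_id _)
    map_comp := fun {X Y Z} f g => by
      have hr : quotRel D (C ∩ D)
          (show (⟨dOb X, hdMem X⟩ : ObjectProperty.FullSubcategory (· ∈ D)) ⟶ ⟨dOb Z, hdMem Z⟩ from
            ObjectProperty.homMk (dmap X Z (f ≫ g)))
          ((show (⟨dOb X, hdMem X⟩ : ObjectProperty.FullSubcategory (· ∈ D)) ⟶ ⟨dOb Y, hdMem Y⟩ from
            ObjectProperty.homMk (dmap X Y f)) ≫
           (show (⟨dOb Y, hdMem Y⟩ : ObjectProperty.FullSubcategory (· ∈ D)) ⟶ ⟨dOb Z, hdMem Z⟩ from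
            ObjectProperty.homMk (dmap Y Z g))) := by
        show FactorsThroughClass (C ∩ D) (dmap X Z (f ≫ g) - dmap X Y f ≫ dmap Y Z g)
        refine keyD X Z _ (cmap X Z (f ≫ g) - cmap X Y f ≫ cmap Y Z g) ?_ (keyComp X Y Z f g)
        rw [Preadditive.sub_comp, Preadditive.comp_sub, hdmap,
          assoc (dmap X Y f) (dmap Y Z g) (iMap Z), hdmap,
          ← assoc (dmap X Y f) (iMap Y) (cmap Y Z g), hdmap,
          assoc (iMap X) (cmap X Y f) (cmap Y Z g)]
      show (Quotient.functor (quotRel D (C ∩ D))).map _ =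
        (Quotient.functor (quotRel D (C ∩ D))).map
          (show (⟨dOb X, hdMem X⟩ : ObjectProperty.FullSubcategory (· ∈ D)) ⟶ ⟨dOb Y, hdMem Y⟩ from
            ObjectProperty.homMk (dmap X Y f)) ≫
        (Quotient.functor (quotRel D (C ∩ D))).map
          (show (⟨dOb Y, hdMem Y⟩ : ObjectProperty.FullSubcategory (· ∈ D)) ⟶ ⟨dOb Z, hdMem Z⟩ from
            ObjectProperty.homMk (dmap Y Z g))
      rw [← Functor.map_comp]
      exact CategoryTheory.Quotient.sound _ hr
  }, fun X => ⟨iMap X, pMap X, hses X⟩⟩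

end Paper
end

section
/- Let (C, D) be a complete cotorsion pair in an abelian category A. Then D is closed under quotient objects if and only if every object of C has projective dimension at most one. -/
open CategoryTheory Category Limits

attribute [local instance] CategoryTheory.Abelian.hasFiniteBiproducts
attribute [local instance] CategoryTheory.Limits.HasFiniteBiproducts.of_hasFiniteProducts

universe w v u

namespace Paper

variable {A : Type u} [Category.{v} A] [Abelian A]

/-- `Ext²(X, −) = 0`, i.e. `X` has projective dimension at most one.  This is phrased
via the long exact sequence: for every epimorphism `q : B ↠ C`, the induced map
`Ext¹(X, B) → Ext¹(X, C)` is surjective, i.e. every extension of `X` by `C` is the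
pushout along `q` of an extension of `X` by `B`. -/
def Ext2Zero (X : A) : Prop :=
  ∀ ⦃B C : A⦄ (q : B ⟶ C), Epi q →
    ∀ ⦃E : A⦄ (i : C ⟶ E) (p : E ⟶ X), IsSes i p →
      ∃ (E' : A) (i' : B ⟶ E') (p' : E' ⟶ X) (e : E' ⟶ E),
        IsSes i' p' ∧ i' ≫ e = q ≫ i ∧ p' = e ≫ p

/-- Pushout of a short exact sequence along a morphism is short exact. -/
lemma isSes_pushout {Y U V Z W : A} {a : Y ⟶ U} {b : U ⟶ V} (hab : IsSes a b)
    {g : Y ⟶ Z} {k : U ⟶ W} {l : Z ⟶ W} (sq : IsPushout a g k l) (hl : Mono l) :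
    ∃ b' : W ⟶ V, k ≫ b' = b ∧ l ≫ b' = 0 ∧ IsSes l b' := by
  obtain ⟨w, hse⟩ := hab
  haveI : Epi b := hse.epi_g
  have hw : a ≫ b = g ≫ (0 : Z ⟶ V) := by simp [w]
  refine ⟨sq.desc b 0 hw, sq.inl_desc b 0 hw, sq.inr_desc b 0 hw, ?_⟩
  set b' := sq.desc b 0 hw with hb'
  have hk : k ≫ b' = b := sq.inl_desc b 0 hw
  have hl0 : l ≫ b' = 0 := sq.inr_desc b 0 hw
  haveI : Epi b' := by
    have : Epi (k ≫ b') := by rw [hk]; infer_instance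
    exact epi_of_epi k b'
  have hcoker := hse.gIsCokernel
  have hcond : ∀ {T : A} (φ : W ⟶ T), l ≫ φ = 0 → a ≫ (k ≫ φ) = 0 := by
    intro T φ hφ
    have : a ≫ k ≫ φ = g ≫ l ≫ φ := by rw [← assoc, ← assoc, sq.w]
    rw [this, hφ, comp_zero]
  have hfac : ∀ {T : A} (φ : W ⟶ T) (hφ : l ≫ φ = 0),
      b' ≫ (CokernelCofork.IsColimit.desc' hcoker (k ≫ φ) (hcond φ hφ)).1 = φ := by
    intro T φ hφ
    apply sq.hom_ext
    · rw [← assoc, hk]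
      exact (CokernelCofork.IsColimit.desc' hcoker (k ≫ φ) _).2
    · rw [← assoc, hl0, zero_comp, hφ]
  have hcl : IsColimit (CokernelCofork.ofπ b' hl0) :=
    CokernelCofork.IsColimit.ofπ b' hl0
      (fun {T} φ hφ => (CokernelCofork.IsColimit.desc' hcoker (k ≫ φ) (hcond φ hφ)).1)
      (fun {T} φ hφ => hfac φ hφ)
      (fun {T} φ hφ m hm => by rw [← cancel_epi b', hm, hfac φ hφ])
  have hex : (ShortComplex.mk l b' hl0).Exact :=
    ShortComplex.exact_of_g_is_cokernel _ hcl
  exact ⟨hl0, { exact := hex }⟩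

/-- Pullback of a short exact sequence along a morphism is short exact. -/
lemma isSes_pullback {Y U V Z P : A} {a : Y ⟶ U} {b : U ⟶ V} (hab : IsSes a b)
    {g : Z ⟶ V} {fst : P ⟶ U} {snd : P ⟶ Z} (sq : IsPullback fst snd b g) (hs : Epi snd) :
    ∃ a' : Y ⟶ P, a' ≫ fst = a ∧ a' ≫ snd = 0 ∧ IsSes a' snd := by
  obtain ⟨w, hse⟩ := hab
  haveI : Mono a := hse.mono_f
  have hw : a ≫ b = (0 : Y ⟶ Z) ≫ g := by simp [w]
  refine ⟨sq.lift a 0 hw, sq.lift_fst a 0 hw, sq.lift_snd a 0 hw, ?_⟩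
  set a' := sq.lift a 0 hw with ha'
  have hf : a' ≫ fst = a := sq.lift_fst a 0 hw
  have hs0 : a' ≫ snd = 0 := sq.lift_snd a 0 hw
  haveI : Mono a' := by
    have : Mono (a' ≫ fst) := by rw [hf]; infer_instance
    exact mono_of_mono a' fst
  have hker := hse.fIsKernel
  have hcond : ∀ {T : A} (φ : T ⟶ P), φ ≫ snd = 0 → (φ ≫ fst) ≫ b = 0 := by
    intro T φ hφ
    have : φ ≫ fst ≫ b = φ ≫ snd ≫ g := by rw [sq.w]
    rw [assoc, this, ← assoc, hφ, zero_comp]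
  have hfac : ∀ {T : A} (φ : T ⟶ P) (hφ : φ ≫ snd = 0),
      (KernelFork.IsLimit.lift' hker (φ ≫ fst) (hcond φ hφ)).1 ≫ a' = φ := by
    intro T φ hφ
    apply sq.hom_ext
    · rw [assoc, hf]
      exact (KernelFork.IsLimit.lift' hker (φ ≫ fst) _).2
    · rw [assoc, hs0, comp_zero, hφ]
  have hcl : IsLimit (KernelFork.ofι a' hs0) :=
    KernelFork.IsLimit.ofι a' hs0
      (fun {T} φ hφ => (KernelFork.IsLimit.lift' hker (φ ≫ fst) (hcond φ hφ)).1)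
      (fun {T} φ hφ => hfac φ hφ)
      (fun {T} φ hφ m hm => by rw [← cancel_mono a', hm, hfac φ hφ])
  have hex : (ShortComplex.mk a' snd hs0).Exact :=
    ShortComplex.exact_of_f_is_kernel _ hcl
  exact ⟨hs0, { exact := hex }⟩


/-- For a complete cotorsion pair `(C, D)`, the class `D` is closed
under quotient objects if and only if every object of `C` has projective dimension at
most one. -/
theorem statement5 {C D : Set A} (h : IsCotorsionPair C D) :
    (∀ {X Y : A} (p : X ⟶ Y), Epi p → X ∈ D → Y ∈ D) ↔ (∀ X ∈ C, Ext2Zero X) := by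
  constructor
  · -- D closed under quotients → every X ∈ C has pd ≤ 1
    intro hD X hXC B C₀ q hq E i p hE
    have hXC' : ∀ Y ∈ D, Ext1Zero X Y := by rw [h.left_eq] at hXC; exact hXC
    obtain ⟨d, c, j, r, hd, hc, hjr⟩ := h.seq₂ B
    haveI hmj : Mono j := hjr.2.mono_f
    haveI hmi : Mono i := hE.2.mono_f
    haveI hre : Epi r := hjr.2.epi_g
    -- the pushout M of d ← B → C₀
    set M := pushout j q with hM
    set u : d ⟶ M := pushout.inl j q with hu
    set m : C₀ ⟶ M := pushout.inr j q with hm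
    have sqM : IsPushout j q u m := IsPushout.of_hasPushout j q
    haveI : Mono m := Abelian.mono_pushout_of_mono_f j q
    haveI : Epi u := pushout.inl_of_epi
    obtain ⟨r', hur, hmr0, hmr⟩ := isSes_pushout hjr sqM inferInstance
    have hMD : M ∈ D := hD u inferInstance hd
    haveI : Mono m := hmr.2.mono_f
    -- the pushout E₁ of E ← C₀ → M
    set E₁ := pushout i m with hE₁
    set e₀ : E ⟶ E₁ := pushout.inl i m with he₀
    set n : M ⟶ E₁ := pushout.inr i m with hn
    have sqE : IsPushout i m e₀ n := IsPushout.of_hasPushout i m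
    haveI : Mono n := Abelian.mono_pushout_of_mono_f i m
    haveI : Mono e₀ := Abelian.mono_pushout_of_mono_g i m
    obtain ⟨p₁, hep, hnp0, hnp⟩ := isSes_pushout hE sqE inferInstance
    obtain ⟨t, hnt, het0, het⟩ := isSes_pushout hmr sqE.flip inferInstance
    -- a splitting of 0 → M → E₁ → X → 0
    obtain ⟨s, hs⟩ := hXC' M hMD n p₁ hnp
    set f : X ⟶ c := -(s ≫ t) with hf
    -- the pullback E' of d → c ← X
    set E' := pullback r f with hE'
    set fs : E' ⟶ d := pullback.fst r f with hfs
    set sn : E' ⟶ X := pullback.snd r f with hsn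
    have sqP : IsPullback fs sn r f := IsPullback.of_hasPullback r f
    haveI : Epi sn := Abelian.epi_pullback_of_epi_f r f
    obtain ⟨i', hif, his0, hise⟩ := isSes_pullback hjr sqP inferInstance
    -- the comparison map
    set ψ : E' ⟶ E₁ := sn ≫ s + fs ≫ (u ≫ n) with hψ
    have hur' : u ≫ (n ≫ t) = r := by rw [hnt, hur]
    have hψt : ψ ≫ t = 0 := by
      have h1 : fs ≫ r = sn ≫ f := sqP.w
      rw [hψ, Preadditive.add_comp, assoc, assoc, assoc, hur', h1, hf]
      simp
    have hker := het.2.fIsKernel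
    obtain ⟨e, he⟩ := KernelFork.IsLimit.lift' hker ψ hψt
    have he' : e ≫ e₀ = ψ := he
    refine ⟨E', i', sn, e, hise, ?_, ?_⟩
    · rw [← cancel_mono e₀, assoc, assoc, he', hψ]
      rw [Preadditive.comp_add, ← assoc, ← assoc, his0, hif]
      have h2 : j ≫ u = q ≫ m := sqM.w
      have h3 : i ≫ e₀ = m ≫ n := sqE.w
      rw [h3, ← assoc, h2]
      simp
    · rw [← hep, ← assoc, he', hψ]
      rw [Preadditive.add_comp, assoc, assoc, assoc, hs, hnp0]
      simp
  · -- every X ∈ C has pd ≤ 1 → D closed under quotients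
    intro hpd X Y p hp hXD
    rw [h.right_eq]
    intro c hcC E i pE hses
    obtain ⟨E', i', p', e, hses', hcomm, hpe⟩ := hpd c hcC p hp i pE hses
    have hXD' : ∀ Z ∈ C, Ext1Zero Z X := by rw [h.right_eq] at hXD; exact hXD
    obtain ⟨s', hs'⟩ := hXD' c hcC i' p' hses'
    exact ⟨s' ≫ e, by rw [assoc, ← hpe, hs']⟩


end Paper
end

section
/- If (C, T, F) is a cotorsion torsion triple in an abelian category A, then every object of C has projective dimension at most one. -/
open CategoryTheory Category Limits

attribute [local instance] CategoryTheory.Abelian.hasFiniteBiproducts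
attribute [local instance] CategoryTheory.Limits.HasFiniteBiproducts.of_hasFiniteProducts

universe w v u

namespace Paper

variable {A : Type u} [Category.{v} A] [Abelian A]

section Aux

variable {A : Type u} [Category.{v} A] [Abelian A]

/-- Pushing out a short exact sequence `0 → A₀ → B → C' → 0` along any map `h : A₀ ⟶ A'`
gives a short exact sequence `0 → A' → pushout f h → C' → 0`. -/
lemma pushout_inr_ses {A₀ B C' A' : A} {f : A₀ ⟶ B} {g : B ⟶ C'} (h : A₀ ⟶ A')
    (hfg : IsSes f g) (wd : f ≫ g = h ≫ (0 : A' ⟶ C')) :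
    IsSes (pushout.inr f h) (pushout.desc g 0 wd) := by
  obtain ⟨w, hse⟩ := hfg
  have hmf : Mono f := hse.mono_f
  have heg : Epi g := hse.epi_g
  have hzero : pushout.inr f h ≫ pushout.desc g 0 wd = 0 := pushout.inr_desc _ _ _
  have hm : Mono (pushout.inr f h) := inferInstance
  have he : Epi (pushout.desc g 0 wd) :=
    epi_of_epi_fac (pushout.inl_desc g 0 wd)
  refine ⟨hzero, { exact := ?_, mono_f := hm, epi_g := he }⟩
  apply ShortComplex.exact_of_g_is_cokernel
  refine CokernelCofork.IsColimit.ofπ' _ _ (fun {W} k hk => ?_)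
  have hk' : f ≫ (pushout.inl f h ≫ k) = 0 := by
    rw [← Category.assoc, pushout.condition, Category.assoc, hk, comp_zero]
  obtain ⟨v, hv⟩ := CokernelCofork.IsColimit.desc' hse.gIsCokernel
    (pushout.inl f h ≫ k) hk'
  refine ⟨v, ?_⟩
  apply pushout.hom_ext
  · exact (pushout.inl_desc_assoc g 0 wd v).trans hv
  · exact (pushout.inr_desc_assoc g 0 wd v).trans (by rw [zero_comp, hk])

/-- Pushing out along the mono of a short exact sequence `0 → A₀ → A' → C'' → 0`
gives a short exact sequence `0 → B → pushout f h → C'' → 0`. -/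
lemma pushout_inl_ses {A₀ B A' C'' : A} (f : A₀ ⟶ B) {h : A₀ ⟶ A'} {k : A' ⟶ C''}
    (hhk : IsSes h k) (wd : f ≫ (0 : B ⟶ C'') = h ≫ k) :
    IsSes (pushout.inl f h) (pushout.desc 0 k wd) := by
  obtain ⟨w, hse⟩ := hhk
  have hmh : Mono h := hse.mono_f
  have hek : Epi k := hse.epi_g
  have hzero : pushout.inl f h ≫ pushout.desc 0 k wd = 0 := pushout.inl_desc _ _ _
  have hm : Mono (pushout.inl f h) := inferInstance
  have he : Epi (pushout.desc 0 k wd) :=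
    epi_of_epi_fac (pushout.inr_desc 0 k wd)
  refine ⟨hzero, { exact := ?_, mono_f := hm, epi_g := he }⟩
  apply ShortComplex.exact_of_g_is_cokernel
  refine CokernelCofork.IsColimit.ofπ' _ _ (fun {W} kk hkk => ?_)
  have hk' : h ≫ (pushout.inr f h ≫ kk) = 0 := by
    rw [← Category.assoc, ← pushout.condition, Category.assoc, hkk, comp_zero]
  obtain ⟨v, hv⟩ := CokernelCofork.IsColimit.desc' hse.gIsCokernel
    (pushout.inr f h ≫ kk) hk'
  refine ⟨v, ?_⟩
  apply pushout.hom_ext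
  · exact (pushout.inl_desc_assoc 0 k wd v).trans (by rw [zero_comp, hkk])
  · exact (pushout.inr_desc_assoc 0 k wd v).trans hv

/-- Pulling back a short exact sequence `0 → A₀ → B → C' → 0` along any map `t : X ⟶ C'`
gives a short exact sequence `0 → A₀ → pullback g t → X → 0`. -/
lemma pullback_ses {A₀ B C' X : A} {f : A₀ ⟶ B} {g : B ⟶ C'} (t : X ⟶ C')
    (hfg : IsSes f g) (wd : f ≫ g = (0 : A₀ ⟶ X) ≫ t) :
    IsSes (pullback.lift f 0 wd) (pullback.snd g t) := by
  obtain ⟨w, hse⟩ := hfg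
  have hmf : Mono f := hse.mono_f
  have heg : Epi g := hse.epi_g
  have hzero : pullback.lift f 0 wd ≫ pullback.snd g t = 0 := pullback.lift_snd _ _ _
  have hm : Mono (pullback.lift f 0 wd) :=
    mono_of_mono_fac (pullback.lift_fst f 0 wd)
  have he : Epi (pullback.snd g t) := inferInstance
  refine ⟨hzero, { exact := ?_, mono_f := hm, epi_g := he }⟩
  apply ShortComplex.exact_of_f_is_kernel
  refine KernelFork.IsLimit.ofι' _ _ (fun {W} kk hkk => ?_)
  have hk' : (kk ≫ pullback.fst g t) ≫ g = 0 := by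
    rw [Category.assoc, pullback.condition, ← Category.assoc, hkk, zero_comp]
  obtain ⟨v, hv⟩ := KernelFork.IsLimit.lift' hse.fIsKernel
    (kk ≫ pullback.fst g t) hk'
  refine ⟨v, ?_⟩
  apply pullback.hom_ext
  · exact (Category.assoc _ _ _).trans ((congrArg (v ≫ ·) (pullback.lift_fst f 0 wd)).trans hv)
  · exact (Category.assoc _ _ _).trans ((congrArg (v ≫ ·) (pullback.lift_snd f 0 wd)).trans
      (comp_zero.trans hkk.symm))

/-- An object with no nonzero maps to the torsion-free class is torsion. -/
lemma mem_torsion_of_hom_zero {T F : Set A} (ht : IsTorsionPair T F) {Z : A}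
    (hz : ∀ W ∈ F, ∀ f : Z ⟶ W, f = 0) : Z ∈ T := by
  obtain ⟨tZ, fZ, i, p, htZ, hfZ, w, hse⟩ := ht.seq Z
  have hp : p = 0 := hz fZ hfZ p
  have hmono : Mono i := hse.mono_f
  have hepi : Epi i := hse.exact.epi_f hp
  have : IsIso i := isIso_of_mono_of_epi i
  exact ht.isoClosed_torsion (asIso i) htZ

/-- The torsion class is closed under quotients. -/
lemma torsion_quot {T F : Set A} (ht : IsTorsionPair T F) {Y Z : A} (hY : Y ∈ T)
    (e : Y ⟶ Z) (he : Epi e) : Z ∈ T := by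
  refine mem_torsion_of_hom_zero ht (fun W hW f => ?_)
  have h0 : e ≫ f = 0 := ht.hom_zero hY hW _
  rw [← cancel_epi e, h0, comp_zero]

end Aux

/-- In a cotorsion torsion triple `(C, T, F)`, every object of `C`
has projective dimension at most one. -/
theorem statement6 {C T F : Set A} (hct : IsCotorsionPair C T) (ht : IsTorsionPair T F) :
    ∀ X ∈ C, Ext2Zero X := by
  intro X hX B C₀ q hq E i p hip
  rw [hct.left_eq] at hX
  obtain ⟨TB, CB, j, π, hTB, hCB, hjπ⟩ := hct.seq₂ B
  obtain ⟨wjπ, _⟩ := id hjπ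
  -- Pushout 1 : Q = pushout of `0 → B → TB → CB → 0` along `q`.
  have wd₁ : j ≫ π = q ≫ (0 : C₀ ⟶ CB) := by rw [wjπ, comp_zero]
  set Q : A := pushout j q with hQdef
  set qt : TB ⟶ Q := pushout.inl j q with hqt
  set j' : C₀ ⟶ Q := pushout.inr j q with hj'
  set π' : Q ⟶ CB := pushout.desc π 0 wd₁ with hπ'
  have hj'π' : IsSes j' π' := pushout_inr_ses q hjπ wd₁
  haveI : Epi q := hq
  have hqtepi : Epi qt := by rw [hqt]; infer_instance
  have hQT : Q ∈ T := torsion_quot ht hTB qt hqtepi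
  -- Pushout 2 : E₁ = pushout of the given extension along `j' : C₀ ⟶ Q`.
  obtain ⟨wip, _⟩ := id hip
  obtain ⟨wj'π', _⟩ := id hj'π'
  have wd₂ : i ≫ p = j' ≫ (0 : Q ⟶ X) := by rw [wip, comp_zero]
  have wd₃ : i ≫ (0 : E ⟶ CB) = j' ≫ π' := by rw [wj'π', comp_zero]
  set E₁ : A := pushout i j' with hE₁def
  set u : E ⟶ E₁ := pushout.inl i j' with hu
  set i₁ : Q ⟶ E₁ := pushout.inr i j' with hi₁
  set p₁ : E₁ ⟶ X := pushout.desc p 0 wd₂ with hp₁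
  set c : E₁ ⟶ CB := pushout.desc 0 π' wd₃ with hc
  have hi₁p₁ : IsSes i₁ p₁ := pushout_inr_ses j' hip wd₂
  have huc : IsSes u c := pushout_inl_ses i hj'π' wd₃
  obtain ⟨wi₁p₁, _⟩ := id hi₁p₁
  obtain ⟨wuc, suc⟩ := id huc
  haveI hmu : Mono u := suc.mono_f
  -- The pushed-out extension of `X` by `Q ∈ T` splits since `X ∈ C`.
  obtain ⟨s, hs⟩ := hX Q hQT i₁ p₁ hi₁p₁
  -- Pullback : E' = pullback of `0 → B → TB → CB → 0` along `θ : X ⟶ CB`.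
  set θ : X ⟶ CB := -(s ≫ c) with hθ
  have wd₄ : j ≫ π = (0 : B ⟶ X) ≫ θ := by rw [wjπ, zero_comp]
  set E' : A := pullback π θ with hE'def
  set i' : B ⟶ E' := pullback.lift j 0 wd₄ with hi'
  set p' : E' ⟶ X := pullback.snd π θ with hp'
  have hi'p' : IsSes i' p' := pullback_ses θ hjπ wd₄
  -- Construct the comparison map `e : E' ⟶ E` using that `u` is the kernel of `c`.
  set w' : E' ⟶ E₁ := pullback.fst π θ ≫ qt ≫ i₁ + p' ≫ s with hw'
  have hi₁c : i₁ ≫ c = π' := by rw [hi₁, hc]; exact pushout.inr_desc _ _ _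
  have hqtπ' : qt ≫ π' = π := by rw [hqt, hπ']; exact pushout.inl_desc _ _ _
  have hw'c : w' ≫ c = 0 := by
    simp only [hw', Preadditive.add_comp, Category.assoc, hi₁c, hqtπ']
    rw [pullback.condition]
    simp [hθ, hp']
  obtain ⟨e, he⟩ := KernelFork.IsLimit.lift' suc.fIsKernel w' hw'c
  have he' : e ≫ u = w' := he
  have hup₁ : u ≫ p₁ = p := by rw [hu, hp₁]; exact pushout.inl_desc _ _ _
  have hjqt : j ≫ qt = q ≫ j' := by rw [hqt, hj']; exact pushout.condition
  have hij' : i ≫ u = j' ≫ i₁ := by rw [hu, hi₁]; exact pushout.condition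
  have h1 : i' ≫ pullback.fst π θ = j := by rw [hi']; exact pullback.lift_fst _ _ _
  have h2 : i' ≫ p' = 0 := by rw [hi', hp']; exact pullback.lift_snd _ _ _
  refine ⟨E', i', p', e, hi'p', ?_, ?_⟩
  · rw [← cancel_mono u, Category.assoc, he', hw', Preadditive.comp_add]
    simp only [← Category.assoc]
    rw [h1, h2, zero_comp, add_zero, hjqt]
    simp only [Category.assoc]
    rw [← hij']
  · rw [show e ≫ p = e ≫ u ≫ p₁ from by rw [hup₁], ← Category.assoc, he', hw',
      Preadditive.add_comp]
    simp only [Category.assoc]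
    rw [wi₁p₁, hs]
    simp


end Paper
end

section
/- Let (T, F, D) be a torsion cotorsion triple in an abelian category A (so (T, F) is a torsion pair and (F, D) is a complete cotorsion pair). Then the torsion functor t and the approximation functor d̃ induce mutually inverse equivalences T ≃ D/(D ∩ F). -/
open CategoryTheory Category Limits

attribute [local instance] CategoryTheory.Abelian.hasFiniteBiproducts
attribute [local instance] CategoryTheory.Limits.HasFiniteBiproducts.of_hasFiniteProducts

universe w v u

namespace Paper

variable {A : Type u} [Category.{v} A] [Abelian A]

section Auxiliary

lemma IsSes.mono_i {X Y Z : A} {i : X ⟶ Y} {p : Y ⟶ Z} (h : IsSes i p) : Mono i := by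
  obtain ⟨w, hw⟩ := h; exact hw.mono_f

lemma IsSes.epi_p {X Y Z : A} {i : X ⟶ Y} {p : Y ⟶ Z} (h : IsSes i p) : Epi p := by
  obtain ⟨w, hw⟩ := h; exact hw.epi_g

lemma IsSes.comp_zero {X Y Z : A} {i : X ⟶ Y} {p : Y ⟶ Z} (h : IsSes i p) : i ≫ p = 0 := by
  obtain ⟨w, hw⟩ := h; exact w

/-- kernel property of a short exact sequence -/
lemma IsSes.liftOfComp {X Y Z W : A} {i : X ⟶ Y} {p : Y ⟶ Z} (h : IsSes i p)
    (f : W ⟶ Y) (hf : f ≫ p = 0) : ∃ l : W ⟶ X, l ≫ i = f := by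
  obtain ⟨w, hw⟩ := h
  haveI := hw.mono_f
  obtain ⟨l, hl⟩ := KernelFork.IsLimit.lift' hw.exact.fIsKernel f hf
  exact ⟨l, by simpa using hl⟩

/-- cokernel property of a short exact sequence -/
lemma IsSes.descOfComp {X Y Z W : A} {i : X ⟶ Y} {p : Y ⟶ Z} (h : IsSes i p)
    (f : Y ⟶ W) (hf : i ≫ f = 0) : ∃ l : Z ⟶ W, p ≫ l = f := by
  obtain ⟨w, hw⟩ := h
  haveI := hw.epi_g
  obtain ⟨l, hl⟩ := CokernelCofork.IsColimit.desc' hw.exact.gIsCokernel f hf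
  exact ⟨l, by simpa using hl⟩

/-- The key lifting lemma: if `0 ⟶ X ⟶ E ⟶ C ⟶ 0` is exact and `Ext¹(C,Y) = 0`,
then any `X ⟶ Y` extends along `X ⟶ E`. -/
lemma lift_of_ext1zero {X E C Y : A} {i : X ⟶ E} {p : E ⟶ C} (h : IsSes i p)
    (f : X ⟶ Y) (hext : Ext1Zero C Y) : ∃ g : E ⟶ Y, i ≫ g = f := by
  haveI := h.mono_i
  haveI := h.epi_p
  have hw : i ≫ p = f ≫ (0 : Y ⟶ C) := by rw [h.comp_zero, Limits.comp_zero]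
  set q : pushout i f ⟶ C := pushout.desc p 0 hw with hqdef
  have hq0 : pushout.inr i f ≫ q = 0 := pushout.inr_desc _ _ _
  haveI hmono : Mono (pushout.inr i f) := inferInstance
  haveI hepi : Epi q := epi_of_epi_fac (pushout.inl_desc p 0 hw)
  have hcolim : IsColimit (CokernelCofork.ofπ q hq0) := by
    refine CokernelCofork.IsColimit.ofπ' q hq0 (fun {W} k hk => ?_)
    have h1 : i ≫ (pushout.inl i f ≫ k) = 0 := by
      rw [← Category.assoc, pushout.condition, Category.assoc, hk, comp_zero]
    refine ⟨(h.descOfComp (pushout.inl i f ≫ k) h1).choose, ?_⟩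
    have hl := (h.descOfComp (pushout.inl i f ≫ k) h1).choose_spec
    apply pushout.hom_ext
    · rw [← Category.assoc, pushout.inl_desc, hl]
    · rw [← Category.assoc, pushout.inr_desc, zero_comp, hk]
  have hex : (ShortComplex.mk (pushout.inr i f) q hq0).Exact :=
    ShortComplex.exact_of_g_is_cokernel _ hcolim
  have hses : IsSes (pushout.inr i f) q :=
    ⟨hq0, { exact := hex, mono_f := hmono, epi_g := hepi }⟩
  obtain ⟨s, hs⟩ := hext (pushout.inr i f) q hses
  set sp := ShortComplex.Splitting.ofExactOfSection _ hex s hs hmono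
  refine ⟨pushout.inl i f ≫ sp.r, ?_⟩
  rw [← Category.assoc, pushout.condition, Category.assoc, sp.f_r, comp_id]

/-- The torsion-free class contains the right `Hom`-perpendicular of `T`. -/
lemma memF_of_perp {T F : Set A} (ht : IsTorsionPair T F) {X : A}
    (hX : ∀ Y ∈ T, ∀ f : Y ⟶ X, f = 0) : X ∈ F := by
  obtain ⟨tX, fX, i, p, hTm, hFm, w, hw⟩ := ht.seq X
  haveI := hw.epi_g
  haveI : Mono p := hw.exact.mono_g (hX tX hTm i)
  haveI : IsIso p := isIso_of_mono_of_epi p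
  exact ht.isoClosed_torsionFree (asIso p).symm hFm

/-- The torsion-free class is closed under extensions. -/
lemma memF_ext {T F : Set A} (ht : IsTorsionPair T F) {X Y Z : A}
    {i : X ⟶ Y} {p : Y ⟶ Z} (h : IsSes i p) (hX : X ∈ F) (hZ : Z ∈ F) : Y ∈ F := by
  refine memF_of_perp ht (fun t htm f => ?_)
  have h1 : f ≫ p = 0 := ht.hom_zero htm hZ (f ≫ p)
  obtain ⟨l, hl⟩ := h.liftOfComp f h1
  rw [← hl, ht.hom_zero htm hX l, zero_comp]

/-- A morphism out of the middle of a `D`-coapproximation sequence that kills the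
subobject factors through an object of `D ∩ F`. -/
lemma killed_factors {T F D : Set A} (ht : IsTorsionPair T F) (hct : IsCotorsionPair F D)
    {K E Q W : A} {i : K ⟶ E} {p : E ⟶ Q} (hses : IsSes i p) (hQ : Q ∈ F) (hW : W ∈ D)
    (δ : E ⟶ W) (hδ : i ≫ δ = 0) : FactorsThroughClass (D ∩ F) δ := by
  obtain ⟨h₁, hh₁⟩ := hses.descOfComp δ hδ
  obtain ⟨dQ, cQ, ι, π, hdD, hcF, hses'⟩ := hct.seq₂ Q
  have hext : Ext1Zero cQ W := by
    have := hcF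
    rw [hct.left_eq] at this
    exact this W hW
  obtain ⟨h₂, hh₂⟩ := lift_of_ext1zero hses' h₁ hext
  refine ⟨dQ, ⟨hdD, memF_ext ht hses' hQ hcF⟩, p ≫ ι, h₂, ?_⟩
  rw [Category.assoc, hh₂, hh₁]

end Auxiliary


/-- For a torsion cotorsion triple `(T, F, D)` — i.e. `(T, F)` is a
torsion pair and `(F, D)` a complete cotorsion pair — the torsion functor `t` and the
approximation functor `d̃` induce mutually inverse equivalences `T ≃ D/(D ∩ F)`:
there are mutually inverse functors `Φ = d̃|_T` and `Ψ = t|_D`, where `Φ X` is a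
special `D`-coapproximation of `X` (with cokernel in `F`) and `Ψ Y` is the torsion
subobject of `Y` (with cokernel in `F`). -/
theorem statement8 {T F D : Set A} (ht : IsTorsionPair T F) (hct : IsCotorsionPair F D) :
    ∃ (Φ : ObjectProperty.FullSubcategory (· ∈ T) ⥤ AddQuot D (D ∩ F))
      (Ψ : AddQuot D (D ∩ F) ⥤ ObjectProperty.FullSubcategory (· ∈ T)),
      Nonempty (Φ ⋙ Ψ ≅ 𝟭 (ObjectProperty.FullSubcategory (· ∈ T))) ∧
      Nonempty (Ψ ⋙ Φ ≅ 𝟭 (AddQuot D (D ∩ F))) ∧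
      (∀ X : ObjectProperty.FullSubcategory (· ∈ T),
        ∃ (cX : A) (_ : cX ∈ F) (i : X.obj ⟶ ((Φ.obj X).as).obj)
          (p : ((Φ.obj X).as).obj ⟶ cX), IsSes i p) ∧
      (∀ Y : AddQuot D (D ∩ F),
        ∃ (fY : A) (_ : fY ∈ F) (i : (Ψ.obj Y).obj ⟶ (Y.as).obj)
          (p : (Y.as).obj ⟶ fY), IsSes i p) := by
  classical
  choose dOb cOb e q hdD hcF hses2 using hct.seq₂
  choose tOb fOb j rr htT hfF hses1 using ht.seq
  have ext1 : ∀ {Q W : A}, Q ∈ F → W ∈ D → Ext1Zero Q W := by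
    intro Q W hQ hW
    rw [hct.left_eq] at hQ
    exact hQ W hW
  have monoE : ∀ Z : A, Mono (e Z) := fun Z => (hses2 Z).mono_i
  have monoJ : ∀ Z : A, Mono (j Z) := fun Z => (hses1 Z).mono_i
  have hLex : ∀ (X X' : A) (f : X ⟶ X'), ∃ g : dOb X ⟶ dOb X', e X ≫ g = f ≫ e X' :=
    fun X X' f => lift_of_ext1zero (hses2 X) (f ≫ e X') (ext1 (hcF X) (hdD X'))
  choose L hL using hLex
  have hMex : ∀ (Y Y' : A) (g : Y ⟶ Y'), ∃ m : tOb Y ⟶ tOb Y', m ≫ j Y' = j Y ≫ g :=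
    fun Y Y' g => (hses1 Y').liftOfComp (j Y ≫ g) (ht.hom_zero (htT Y) (hfF Y') _)
  choose M hM using hMex
  have kf2 : ∀ (Z W : A), W ∈ D → ∀ δ : dOb Z ⟶ W, e Z ≫ δ = 0 →
      FactorsThroughClass (D ∩ F) δ :=
    fun Z W hW δ hδ => killed_factors ht hct (hses2 Z) (hcF Z) hW δ hδ
  have kf1 : ∀ (Z W : A), W ∈ D → ∀ δ : Z ⟶ W, j Z ≫ δ = 0 →
      FactorsThroughClass (D ∩ F) δ :=
    fun Z W hW δ hδ => killed_factors ht hct (hses1 Z) (hfF Z) hW δ hδ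
  have hβex : ∀ X : A, ∃ b : tOb (dOb X) ⟶ X, b ≫ e X = j (dOb X) :=
    fun X => (hses2 X).liftOfComp (j (dOb X)) (ht.hom_zero (htT (dOb X)) (hcF X) _)
  choose β hβ using hβex
  have hαex : ∀ X : A, X ∈ T → ∃ a : X ⟶ tOb (dOb X), a ≫ j (dOb X) = e X :=
    fun X hX => (hses1 (dOb X)).liftOfComp (e X) (ht.hom_zero hX (hfF (dOb X)) _)
  choose α hα using hαex
  have hvex : ∀ Y : A, ∃ vv : Y ⟶ dOb (tOb Y), j Y ≫ vv = e (tOb Y) :=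
    fun Y => lift_of_ext1zero (hses1 Y) (e (tOb Y)) (ext1 (hfF Y) (hdD (tOb Y)))
  choose vv hv using hvex
  have huex : ∀ Y : A, Y ∈ D → ∃ u : dOb (tOb Y) ⟶ Y, e (tOb Y) ≫ u = j Y :=
    fun Y hY => lift_of_ext1zero (hses2 (tOb Y)) (j Y) (ext1 (hcF (tOb Y)) hY)
  choose uu hu using huex
  let DX : A → ObjectProperty.FullSubcategory (· ∈ D) := fun Z => ⟨dOb Z, hdD Z⟩
  let Φ : ObjectProperty.FullSubcategory (· ∈ T) ⥤ AddQuot D (D ∩ F) :=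
    { obj := fun X => (Quotient.functor _).obj (DX X.obj)
      map := fun {X X'} f =>
        (Quotient.functor _).map (show DX X.obj ⟶ DX X'.obj from ObjectProperty.homMk (L X.obj X'.obj f.hom))
      map_id := fun X => by
        rw [← (Quotient.functor _).map_id]
        refine CategoryTheory.Quotient.sound _ ?_
        show FactorsThroughClass (D ∩ F) (L X.obj X.obj (𝟙 X.obj) - 𝟙 (dOb X.obj))
        refine kf2 _ _ (hdD X.obj) _ ?_
        rw [Preadditive.comp_sub, hL, Category.comp_id, Category.id_comp, sub_self]
      map_comp := fun {X X' X''} f g => by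
        rw [← (Quotient.functor _).map_comp]
        refine CategoryTheory.Quotient.sound _ ?_
        show FactorsThroughClass (D ∩ F)
          (L X.obj X''.obj (f.hom ≫ g.hom) - L X.obj X'.obj f.hom ≫ L X'.obj X''.obj g.hom)
        refine kf2 _ _ (hdD X''.obj) _ ?_
        simp only [Preadditive.comp_sub, sub_eq_zero, hL, reassoc_of% hL, Category.assoc] }
  let G : ObjectProperty.FullSubcategory (· ∈ D) ⥤ ObjectProperty.FullSubcategory (· ∈ T) :=
    { obj := fun Y => ⟨tOb Y.obj, htT Y.obj⟩
      map := fun {Y Y'} g =>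
        show (⟨tOb Y.obj, htT Y.obj⟩ : ObjectProperty.FullSubcategory (· ∈ T)) ⟶ ⟨tOb Y'.obj, htT Y'.obj⟩ from
          ObjectProperty.homMk (M Y.obj Y'.obj g.hom)
      map_id := fun Y => by
        haveI := monoJ Y.obj
        apply ObjectProperty.hom_ext
        show M Y.obj Y.obj (𝟙 Y.obj) = 𝟙 (tOb Y.obj)
        apply (cancel_mono (j Y.obj)).mp
        rw [hM, Category.comp_id, Category.id_comp]
      map_comp := fun {Y Y' Y''} f g => by
        haveI := monoJ Y''.obj
        apply ObjectProperty.hom_ext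
        show M Y.obj Y''.obj (f.hom ≫ g.hom) = M Y.obj Y'.obj f.hom ≫ M Y'.obj Y''.obj g.hom
        apply (cancel_mono (j Y''.obj)).mp
        simp only [Category.assoc, hM, reassoc_of% hM] }
  have hG : ∀ (x y : ObjectProperty.FullSubcategory (· ∈ D)) (f₁ f₂ : x ⟶ y),
      quotRel D (D ∩ F) f₁ f₂ → G.map f₁ = G.map f₂ := by
    intro x y f₁ f₂ hrel
    obtain ⟨Z, hZ, a, b, hab⟩ := hrel
    haveI := monoJ y.obj
    apply ObjectProperty.hom_ext
    show M x.obj y.obj f₁.hom = M x.obj y.obj f₂.hom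
    apply (cancel_mono (j y.obj)).mp
    rw [hM, hM, ← sub_eq_zero, ← Preadditive.comp_sub, ← hab, ← Category.assoc,
      ht.hom_zero (htT x.obj) hZ.2 (j x.obj ≫ a), zero_comp]
  refine ⟨Φ, CategoryTheory.Quotient.lift _ G hG, ⟨?_⟩, ⟨?_⟩, ?_, ?_⟩
  · refine NatIso.ofComponents (fun X =>
      { hom := ObjectProperty.homMk (β X.obj)
        inv := ObjectProperty.homMk (α X.obj X.property)
        hom_inv_id := by
          haveI := monoJ (dOb X.obj)
          apply ObjectProperty.hom_ext
          show β X.obj ≫ α X.obj X.property = 𝟙 (tOb (dOb X.obj))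
          apply (cancel_mono (j (dOb X.obj))).mp
          rw [Category.assoc, hα, hβ, Category.id_comp]
        inv_hom_id := by
          haveI := monoE X.obj
          apply ObjectProperty.hom_ext
          show α X.obj X.property ≫ β X.obj = 𝟙 X.obj
          apply (cancel_mono (e X.obj)).mp
          rw [Category.assoc, hβ, hα, Category.id_comp] })
      (fun {X X'} f => ?_)
    haveI := monoE X'.obj
    apply ObjectProperty.hom_ext
    show M (dOb X.obj) (dOb X'.obj) (L X.obj X'.obj f.hom) ≫ β X'.obj = β X.obj ≫ f.hom
    apply (cancel_mono (e X'.obj)).mp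
    simp only [Category.assoc, hβ, hM]
    rw [← hβ X.obj, Category.assoc, hL]
  · refine NatIso.ofComponents (fun Y =>
      { hom := (Quotient.functor _).map
          (show DX (tOb Y.as.obj) ⟶ Y.as from ObjectProperty.homMk (uu Y.as.obj Y.as.property))
        inv := (Quotient.functor _).map
          (show Y.as ⟶ DX (tOb Y.as.obj) from ObjectProperty.homMk (vv Y.as.obj))
        hom_inv_id := by
          show (Quotient.functor (quotRel D (D ∩ F))).map
              (show DX (tOb Y.as.obj) ⟶ Y.as from ObjectProperty.homMk (uu Y.as.obj Y.as.property)) ≫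
            (Quotient.functor (quotRel D (D ∩ F))).map
              (show Y.as ⟶ DX (tOb Y.as.obj) from ObjectProperty.homMk (vv Y.as.obj)) =
            𝟙 ((Quotient.functor (quotRel D (D ∩ F))).obj (DX (tOb Y.as.obj)))
          rw [← Functor.map_comp, ← (Quotient.functor (quotRel D (D ∩ F))).map_id]
          refine CategoryTheory.Quotient.sound _ ?_
          show FactorsThroughClass (D ∩ F)
            (uu Y.as.obj Y.as.property ≫ vv Y.as.obj - 𝟙 (dOb (tOb Y.as.obj)))
          refine kf2 _ _ (hdD (tOb Y.as.obj)) _ ?_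
          rw [Preadditive.comp_sub, Category.comp_id, ← Category.assoc, hu, hv, sub_self]
        inv_hom_id := by
          show (Quotient.functor (quotRel D (D ∩ F))).map
              (show Y.as ⟶ DX (tOb Y.as.obj) from ObjectProperty.homMk (vv Y.as.obj)) ≫
            (Quotient.functor (quotRel D (D ∩ F))).map
              (show DX (tOb Y.as.obj) ⟶ Y.as from ObjectProperty.homMk (uu Y.as.obj Y.as.property)) =
            𝟙 ((Quotient.functor (quotRel D (D ∩ F))).obj Y.as)
          rw [← Functor.map_comp, ← (Quotient.functor (quotRel D (D ∩ F))).map_id]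
          refine CategoryTheory.Quotient.sound _ ?_
          show FactorsThroughClass (D ∩ F)
            (vv Y.as.obj ≫ uu Y.as.obj Y.as.property - 𝟙 Y.as.obj)
          refine kf1 _ _ Y.as.property _ ?_
          rw [Preadditive.comp_sub, Category.comp_id, ← Category.assoc, hv, hu, sub_self] })
      (fun {Y Y'} f => ?_)
    induction f using Quot.ind with
    | _ f₀ =>
      show (Quotient.functor (quotRel D (D ∩ F))).map
          (show DX (tOb Y.as.obj) ⟶ DX (tOb Y'.as.obj) from
            ObjectProperty.homMk (L (tOb Y.as.obj) (tOb Y'.as.obj) (M Y.as.obj Y'.as.obj f₀.hom))) ≫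
        (Quotient.functor (quotRel D (D ∩ F))).map
          (show DX (tOb Y'.as.obj) ⟶ Y'.as from ObjectProperty.homMk (uu Y'.as.obj Y'.as.property)) =
        (Quotient.functor (quotRel D (D ∩ F))).map
          (show DX (tOb Y.as.obj) ⟶ Y.as from ObjectProperty.homMk (uu Y.as.obj Y.as.property)) ≫
        (Quotient.functor (quotRel D (D ∩ F))).map f₀
      rw [← Functor.map_comp, ← Functor.map_comp]
      refine CategoryTheory.Quotient.sound _ ?_
      show FactorsThroughClass (D ∩ F)
        (L (tOb Y.as.obj) (tOb Y'.as.obj) (M Y.as.obj Y'.as.obj f₀.hom) ≫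
            uu Y'.as.obj Y'.as.property -
          uu Y.as.obj Y.as.property ≫ f₀.hom)
      refine kf2 _ _ Y'.as.property _ ?_
      rw [Preadditive.comp_sub, ← Category.assoc, hL, Category.assoc, hu, hM,
        ← Category.assoc, hu, sub_self]
  · intro X
    exact ⟨cOb X.obj, hcF X.obj, e X.obj, q X.obj, hses2 X.obj⟩
  · intro Y
    exact ⟨fOb Y.as.obj, hfF Y.as.obj, j Y.as.obj, rr Y.as.obj, hses1 Y.as.obj⟩

end Paper
end

section
/- Let A be a noetherian abelian category with enough projectives and T a weak tilting subcategory of A. Then T is contravariantly finite in A, i.e., every object of A admits a right T-approximation. -/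
open CategoryTheory Category Limits

attribute [local instance] CategoryTheory.Abelian.hasFiniteBiproducts
attribute [local instance] CategoryTheory.Limits.HasFiniteBiproducts.of_hasFiniteProducts

universe w v u

namespace Paper

variable {A : Type u} [Category.{v} A] [Abelian A]

section Statement9Aux

/-- A short exact sequence `0 → K → B → N → 0` with `K = ker e` for an epi `e`. -/
lemma isSes_kernel {B N : A} (e : B ⟶ N) [Epi e] : IsSes (kernel.ι e) e := by
  refine ⟨kernel.condition e, ?_⟩
  exact { exact := ShortComplex.exact_of_f_is_kernel _ (kernelIsKernel e),
          mono_f := by dsimp; infer_instance,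
          epi_g := by dsimp; infer_instance }

/-- Pushing out a short exact sequence `0 → X → Y → Z → 0` along `f : X ⟶ X'`
gives a short exact sequence `0 → X' → Y ⊔_X ⊔ → Z → 0` (via `pushout.inl`). -/
lemma isSes_pushout_inl {X Y Z X' : A} {i : X ⟶ Y} {p : Y ⟶ Z} (h : IsSes i p) (f : X ⟶ X')
    (w : f ≫ (0 : X' ⟶ Z) = i ≫ p) :
    IsSes (pushout.inl f i) (pushout.desc 0 p w) := by
  obtain ⟨w0, hse⟩ := h
  haveI : Mono i := hse.mono_f
  haveI : Epi p := hse.epi_g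
  have hinl : pushout.inl f i ≫ pushout.desc 0 p w = 0 := pushout.inl_desc _ _ _
  have hinr : pushout.inr f i ≫ pushout.desc 0 p w = p := pushout.inr_desc _ _ _
  haveI hq : Epi (pushout.desc 0 p w) := epi_of_epi_fac hinr
  have hcoker : IsColimit (CokernelCofork.ofπ (pushout.desc 0 p w) hinl) := by
    refine CokernelCofork.IsColimit.ofπ' _ _ (fun {W} k hk => ?_)
    have h0 : i ≫ (pushout.inr f i ≫ k) = 0 := by
      rw [← assoc, ← pushout.condition, assoc, hk, comp_zero]
    obtain ⟨c, hc⟩ := Cofork.IsColimit.desc' hse.exact.gIsCokernel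
      (pushout.inr f i ≫ k) (by rw [h0, zero_comp])
    refine ⟨c, ?_⟩
    apply pushout.hom_ext
    · rw [← assoc, pushout.inl_desc, zero_comp, hk]
    · rw [← assoc, pushout.inr_desc]
      exact hc
  exact ⟨hinl, { exact := ShortComplex.exact_of_g_is_cokernel _ hcoker,
                 mono_f := by dsimp; infer_instance,
                 epi_g := hq }⟩

/-- The other orientation of `isSes_pushout_inl` (via `pushout.inr`). -/
lemma isSes_pushout_inr {X Y Z X' : A} {i : X ⟶ Y} {p : Y ⟶ Z} (h : IsSes i p) (f : X ⟶ X')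
    (w : i ≫ p = f ≫ (0 : X' ⟶ Z)) :
    IsSes (pushout.inr i f) (pushout.desc p 0 w) := by
  obtain ⟨w0, hse⟩ := h
  haveI : Mono i := hse.mono_f
  haveI : Epi p := hse.epi_g
  have hinr : pushout.inr i f ≫ pushout.desc p 0 w = 0 := pushout.inr_desc _ _ _
  have hinl : pushout.inl i f ≫ pushout.desc p 0 w = p := pushout.inl_desc _ _ _
  haveI hq : Epi (pushout.desc p 0 w) := epi_of_epi_fac hinl
  have hcoker : IsColimit (CokernelCofork.ofπ (pushout.desc p 0 w) hinr) := by
    refine CokernelCofork.IsColimit.ofπ' _ _ (fun {W} k hk => ?_)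
    have h0 : i ≫ (pushout.inl i f ≫ k) = 0 := by
      rw [← assoc, pushout.condition, assoc, hk, comp_zero]
    obtain ⟨c, hc⟩ := Cofork.IsColimit.desc' hse.exact.gIsCokernel
      (pushout.inl i f ≫ k) (by rw [h0, zero_comp])
    refine ⟨c, ?_⟩
    apply pushout.hom_ext
    · rw [← assoc, pushout.inl_desc]
      exact hc
    · rw [← assoc, pushout.inr_desc, zero_comp, hk]
  exact ⟨hinr, { exact := ShortComplex.exact_of_g_is_cokernel _ hcoker,
                 mono_f := by dsimp; infer_instance,
                 epi_g := hq }⟩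

/-- The core lifting lemma: given a projective-type presentation `0 → P₁ → P₀ → T' → 0`,
a map `γ : P₁ ⟶ Y` with `Ext¹(T', Y) = 0`, and a commuting configuration into `W`,
one can lift `r : T' ⟶ Q` through `q : W ⟶ Q`. -/
lemma core_lift {P₁ P₀ T' Y W Q : A} {j : P₁ ⟶ P₀} {π : P₀ ⟶ T'} (hses : IsSes j π)
    (γ : P₁ ⟶ Y) (hY : Ext1Zero T' Y) (δ : Y ⟶ W) (α : P₀ ⟶ W)
    (hcomm : γ ≫ δ = j ≫ α) {q : W ⟶ Q} {r : T' ⟶ Q}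
    (h0 : δ ≫ q = 0) (hπ : α ≫ q = π ≫ r) : ∃ h : T' ⟶ W, h ≫ q = r := by
  have hU := isSes_pushout_inl hses γ (by rw [comp_zero, hses.1])
  obtain ⟨s, hs⟩ := hY _ _ hU
  refine ⟨s ≫ pushout.desc δ α hcomm, ?_⟩
  have hkey : pushout.desc δ α hcomm ≫ q =
      pushout.desc (0 : Y ⟶ T') π (by rw [comp_zero, hses.1]) ≫ r := by
    apply pushout.hom_ext
    · rw [← assoc, pushout.inl_desc, ← assoc, pushout.inl_desc, h0, zero_comp]
    · rw [← assoc, pushout.inr_desc, ← assoc, pushout.inr_desc, hπ]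
  rw [assoc, hkey, ← assoc, hs, id_comp]

/-- If `N` is an epimorphic image of an object of a weak tilting subcategory `T`,
then `Ext¹(T', N) = 0` for all `T' ∈ T`. -/
lemma ext1Zero_of_epi_from {T : Set A} (hT : IsWeakTilting T) {Y N : A} (hY : Y ∈ T)
    (u : Y ⟶ N) [Epi u] {T' : A} (hT' : T' ∈ T) : Ext1Zero T' N := by
  intro W i p hsesE
  obtain ⟨P₁, P₀, j, π, hP₁, hP₀, hsesP⟩ := hT.pd_le_one T' hT'
  obtain ⟨wE, hseE⟩ := hsesE
  haveI : Epi p := hseE.epi_g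
  haveI : Mono i := hseE.mono_f
  haveI := hP₀
  haveI := hP₁
  set α : P₀ ⟶ W := Projective.factorThru π p with hαdef
  have hα : α ≫ p = π := Projective.factorThru_comp π p
  have h1 : (j ≫ α) ≫ p = 0 := by rw [assoc, hα, hsesP.1]
  obtain ⟨β, hβ⟩ := KernelFork.IsLimit.lift' hseE.exact.fIsKernel (j ≫ α) h1
  set γ : P₁ ⟶ Y := Projective.factorThru β u with hγdef
  have hγ : γ ≫ u = β := Projective.factorThru_comp β u
  refine core_lift hsesP γ (hT.ext1_zero hT' hY) (u ≫ i) α ?_ ?_ ?_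
  · rw [← assoc, hγ]
    exact hβ
  · rw [assoc, wE, comp_zero]
  · rw [hα, comp_id]

/-- Lifting through an epimorphism whose kernel is `Ext¹`-orthogonal to `T'`. -/
lemma lift_of_perp {B N K : A} {k : K ⟶ B} {e : B ⟶ N} (hse : IsSes k e)
    {T' : A} (hpd : PdLeOne T') (hext : Ext1Zero T' K) (g : T' ⟶ N) :
    ∃ l : T' ⟶ B, l ≫ e = g := by
  obtain ⟨P₁, P₀, j, π, hP₁, hP₀, hsesP⟩ := hpd
  obtain ⟨wK, hseK⟩ := hse
  haveI : Epi e := hseK.epi_g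
  haveI : Mono k := hseK.mono_f
  haveI := hP₀
  set α : P₀ ⟶ B := Projective.factorThru (π ≫ g) e with hαdef
  have hα : α ≫ e = π ≫ g := Projective.factorThru_comp (π ≫ g) e
  have h1 : (j ≫ α) ≫ e = 0 := by rw [assoc, hα, ← assoc, hsesP.1, zero_comp]
  obtain ⟨β, hβ⟩ := KernelFork.IsLimit.lift' hseK.exact.fIsKernel (j ≫ α) h1
  exact core_lift hsesP β hext k α hβ wK hα

end Statement9Aux

/-- In a noetherian abelian category with enough projectives, every
weak tilting subcategory is contravariantly finite, i.e. every object admits a right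
`T`-approximation. -/
theorem statement9 [EnoughProjectives A] [∀ X : A, IsNoetherianObject X]
    {T : Set A} (hT : IsWeakTilting T) :
    ∀ E : A, ∃ (X : A) (φ : X ⟶ E), IsRightApprox T φ := by
  intro E
  classical
  -- `T` is nonempty
  obtain ⟨Tz, To, i', p', hTz, hTo, hses'⟩ :=
    hT.coresolution (Projective.over E) (Projective.projective_over E)
  -- maximal image of a map from `T` into `E`
  obtain ⟨M, hMS, hmax⟩ := (wellFounded_gt (α := Subobject E)).has_min
    {s : Subobject E | ∃ (X : A) (_ : X ∈ T) (f : X ⟶ E), imageSubobject f = s}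
    ⟨imageSubobject (0 : Tz ⟶ E), Tz, hTz, 0, rfl⟩
  obtain ⟨X₀, hX₀, f₀, hf₀⟩ := hMS
  subst hf₀
  -- every map from `T` into `E` has image contained in the maximal image
  have himg : ∀ (X' : A), X' ∈ T → ∀ g : X' ⟶ E, imageSubobject g ≤ imageSubobject f₀ := by
    intro X' hX' g
    have hd : imageSubobject (biprod.desc f₀ g) ∈
        {s : Subobject E | ∃ (X : A) (_ : X ∈ T) (f : X ⟶ E), imageSubobject f = s} :=
      ⟨X₀ ⊞ X', hT.sum_mem hX₀ hX', biprod.desc f₀ g, rfl⟩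
    have h1 : imageSubobject f₀ ≤ imageSubobject (biprod.desc f₀ g) := by
      have := imageSubobject_comp_le (biprod.inl : X₀ ⟶ X₀ ⊞ X') (biprod.desc f₀ g)
      rwa [biprod.inl_desc] at this
    have h2 : imageSubobject (biprod.desc f₀ g) = imageSubobject f₀ := by
      by_contra hne'
      exact hmax _ hd (lt_of_le_of_ne h1 (Ne.symm hne'))
    have h3 : imageSubobject g ≤ imageSubobject (biprod.desc f₀ g) := by
      have := imageSubobject_comp_le (biprod.inr : X' ⟶ X₀ ⊞ X') (biprod.desc f₀ g)
      rwa [biprod.inr_desc] at this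
    exact h2 ▸ h3
  -- the epi onto the maximal image and its kernel
  set e₀ : X₀ ⟶ (imageSubobject f₀ : A) := factorThruImageSubobject f₀ with he₀
  set k : kernel e₀ ⟶ X₀ := kernel.ι e₀ with hk
  have hses₀ : IsSes k e₀ := isSes_kernel e₀
  -- embed the kernel into an object with vanishing `Ext¹(T, -)`
  obtain ⟨Tc0, Tc1, j', pic, hTc0, hTc1, hsesC⟩ :=
    hT.coresolution (Projective.over (kernel e₀)) (Projective.projective_over _)
  set pK : Projective.over (kernel e₀) ⟶ kernel e₀ := Projective.π _ with hpK
  set κ : kernel e₀ ⟶ pushout pK j' := pushout.inl pK j' with hκ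
  have hsesκ : IsSes κ (pushout.desc 0 pic (by rw [comp_zero, hsesC.1])) :=
    isSes_pushout_inl hsesC pK (by rw [comp_zero, hsesC.1])
  set τ : pushout pK j' ⟶ Tc1 := pushout.desc 0 pic (by rw [comp_zero, hsesC.1]) with hτ
  haveI : Epi (pushout.inr pK j' : Tc0 ⟶ pushout pK j') := inferInstance
  have hperp : ∀ X' ∈ T, Ext1Zero X' (pushout pK j') := fun X' hX' =>
    ext1Zero_of_epi_from hT hTc0 (pushout.inr pK j') hX'
  -- the big pushout
  set inlX : pushout pK j' ⟶ pushout κ k := pushout.inl κ k with hinlX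
  set inrX : X₀ ⟶ pushout κ k := pushout.inr κ k with hinrX
  have hsesetil : IsSes inlX (pushout.desc 0 e₀ (by rw [comp_zero, hses₀.1])) :=
    isSes_pushout_inl hses₀ κ (by rw [comp_zero, hses₀.1])
  set etil : pushout κ k ⟶ (imageSubobject f₀ : A) :=
    pushout.desc 0 e₀ (by rw [comp_zero, hses₀.1]) with hetil
  have hsesσ : IsSes inrX (pushout.desc τ 0 (by rw [comp_zero, hsesκ.1])) :=
    isSes_pushout_inr hsesκ k (by rw [comp_zero, hsesκ.1])
  set σ : pushout κ k ⟶ Tc1 := pushout.desc τ 0 (by rw [comp_zero, hsesκ.1]) with hσ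
  -- the sequence 0 → X₀ → X̃ → Tc1 → 0 splits, so X̃ ∈ T
  obtain ⟨s, hs⟩ := hT.ext1_zero hTc1 hX₀ inrX σ hsesσ
  obtain ⟨wσ, hseσ⟩ := hsesσ
  haveI : Mono inrX := hseσ.mono_f
  have hφσ : (𝟙 (pushout κ k) - σ ≫ s) ≫ σ = 0 := by
    rw [Preadditive.sub_comp, id_comp, assoc, hs, comp_id, sub_self]
  obtain ⟨r, hr⟩ := KernelFork.IsLimit.lift' hseσ.exact.fIsKernel (𝟙 _ - σ ≫ s) hφσ
  have hmemX : pushout κ k ∈ T := by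
    refine hT.summand_mem (hT.sum_mem hX₀ hTc1) ⟨biprod.lift r σ, biprod.desc inrX s, ?_⟩
    rw [biprod.lift_desc]
    have : r ≫ inrX = 𝟙 (pushout κ k) - σ ≫ s := hr
    rw [this, sub_add_cancel]
  -- the approximation
  refine ⟨pushout κ k, etil ≫ (imageSubobject f₀).arrow, hmemX, ?_⟩
  intro X' hX' g
  have hle : imageSubobject g ≤ imageSubobject f₀ := himg X' hX' g
  set g₀ : X' ⟶ (imageSubobject f₀ : A) :=
    factorThruImageSubobject g ≫ Subobject.ofLE _ _ hle with hg₀def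
  have hg₀ : g₀ ≫ (imageSubobject f₀).arrow = g := by
    rw [hg₀def, assoc, Subobject.ofLE_arrow, imageSubobject_arrow_comp]
  obtain ⟨l, hl⟩ := lift_of_perp hsesetil (hT.pd_le_one X' hX') (hperp X' hX') g₀
  exact ⟨l, by rw [← assoc, hl, hg₀]⟩


end Paper
end
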